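/- Let H be a Coxeter arrangement in a finite-dimensional real inner product space V, with Coxeter group W generated by the orthogonal reflections in its hyperplanes, and fix a base chamber. Then for every integrable function f : V → ℂ and every w ∈ W, the pizza quantity satisfies P(H, f ∘ w) = det(w) · P(H, f). In particular, if f is invariant under some reflection in W, then P(H, f) = 0. -/

import Mathlib

open MeasureTheory
open scoped RealInnerProductSpace

noncomputable section
attribute [local instance] Classical.propDecidable

/-- The hyperplane orthogonal to the unit vector `e`. -/
def hyp {n : ℕ} (e : EuclideanSpace ℝ (Fin n)) : Submodule ℝ (EuclideanSpace ℝ (Fin n)) :=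
  (ℝ ∙ e)ᗮ

def region {n : ℕ} (E : Finset (EuclideanSpace ℝ (Fin n))) (σ : E → Bool) :
    Set (EuclideanSpace ℝ (Fin n)) :=
  {x | ∀ e : E, if σ e then 0 < ⟪(e : EuclideanSpace ℝ (Fin n)), x⟫
       else ⟪(e : EuclideanSpace ℝ (Fin n)), x⟫ < 0}

def chamberSign {n : ℕ} (E : Finset (EuclideanSpace ℝ (Fin n))) (σ : E → Bool) : ℝ :=
  (-1) ^ (Finset.univ.filter (fun e : E => σ e = false)).card

/-- The pizza quantity of an integrable function, base chamber the all-positive region. -/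
def pizzaC {n : ℕ} (E : Finset (EuclideanSpace ℝ (Fin n)))
    (f : EuclideanSpace ℝ (Fin n) → ℂ) : ℂ :=
  ∑ σ : (E → Bool), (chamberSign E σ : ℂ) * ∫ x in region E σ, f x

open Submodule (reflection reflection_reflection reflection_apply
  reflection_mem_subspace_orthogonalComplement_eq_neg det_reflection)

namespace PizzaAux

variable {n : ℕ}

lemma refl_invol (e x : EuclideanSpace ℝ (Fin n)) :
    reflection (hyp e) (reflection (hyp e) x) = x :=
  reflection_reflection _ x

lemma refl_adj (e x y : EuclideanSpace ℝ (Fin n)) :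
    ⟪reflection (hyp e) x, y⟫ = ⟪x, reflection (hyp e) y⟫ := by
  conv_lhs => rw [← refl_invol e y]
  exact (reflection (hyp e)).inner_map_map x (reflection (hyp e) y)

lemma refl_self (e : EuclideanSpace ℝ (Fin n)) : reflection (hyp e) e = -e :=
  reflection_mem_subspace_orthogonalComplement_eq_neg
    ((ℝ ∙ e).le_orthogonal_orthogonal (Submodule.mem_span_singleton_self e))

lemma mem_span_of_refl_neg {e g : EuclideanSpace ℝ (Fin n)}
    (hg : reflection (hyp e) g = -g) : g ∈ ℝ ∙ e := by
  have h := reflection_apply (K := hyp e) g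
  rw [hg] at h
  have h2 : (2 : ℕ) • ((Submodule.orthogonalProjectionOnto (hyp e) g : EuclideanSpace ℝ (Fin n))) = 0 := by
    have h3 := eq_sub_iff_add_eq.mp h
    rw [neg_add_cancel] at h3
    exact h3.symm
  have h4 : ((Submodule.orthogonalProjectionOnto (hyp e) g : EuclideanSpace ℝ (Fin n))) = 0 := by
    rw [← Nat.cast_smul_eq_nsmul ℝ] at h2
    rcases smul_eq_zero.mp h2 with h | h
    · norm_num at h
    · exact h
  have h5 : Submodule.orthogonalProjectionOnto (hyp e) g = 0 := by
    ext1; simpa using h4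
  have h6 : g ∈ (hyp e)ᗮ := Submodule.orthogonalProjectionOnto_eq_zero_iff.mp h5
  rwa [hyp, Submodule.orthogonal_orthogonal] at h6

lemma eq_or_eq_neg {e g : EuclideanSpace ℝ (Fin n)} (he : ‖e‖ = 1) (hg1 : ‖g‖ = 1)
    (h : g ∈ ℝ ∙ e) : g = e ∨ g = -e := by
  obtain ⟨c, rfl⟩ := Submodule.mem_span_singleton.mp h
  rw [norm_smul, he, mul_one, Real.norm_eq_abs] at hg1
  rcases (abs_eq zero_le_one).mp hg1 with h | h <;> subst h
  · left; rw [one_smul]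
  · right; rw [neg_smul, one_smul]

end PizzaAux

namespace PizzaAux

variable {n : ℕ} (E : Finset (EuclideanSpace ℝ (Fin n))) (e : EuclideanSpace ℝ (Fin n))

/-- The induced signed permutation of `E` given by the reflection in `hyp e`. -/
def piMap (hmem : ∀ g : E, reflection (hyp e) (g : EuclideanSpace ℝ (Fin n)) ∉ E →
    -(reflection (hyp e) (g : EuclideanSpace ℝ (Fin n))) ∈ E) : E → E := fun g =>
  if h : reflection (hyp e) (g : EuclideanSpace ℝ (Fin n)) ∈ E then ⟨_, h⟩ else ⟨_, hmem g h⟩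

variable (hmem : ∀ g : E, reflection (hyp e) (g : EuclideanSpace ℝ (Fin n)) ∉ E →
    -(reflection (hyp e) (g : EuclideanSpace ℝ (Fin n))) ∈ E)

lemma piMap_pos {g : E} (h : reflection (hyp e) (g : EuclideanSpace ℝ (Fin n)) ∈ E) :
    (piMap E e hmem g : EuclideanSpace ℝ (Fin n)) = reflection (hyp e) (g : EuclideanSpace ℝ (Fin n)) := by
  simp only [piMap, dif_pos h]

lemma piMap_neg {g : E} (h : reflection (hyp e) (g : EuclideanSpace ℝ (Fin n)) ∉ E) :
    (piMap E e hmem g : EuclideanSpace ℝ (Fin n)) = -(reflection (hyp e) (g : EuclideanSpace ℝ (Fin n))) := by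
  simp only [piMap, dif_neg h]

lemma refl_piMap_pos {g : E} (h : reflection (hyp e) (g : EuclideanSpace ℝ (Fin n)) ∈ E) :
    reflection (hyp e) (piMap E e hmem g : EuclideanSpace ℝ (Fin n)) = (g : EuclideanSpace ℝ (Fin n)) := by
  rw [piMap_pos E e hmem h, refl_invol]

lemma refl_piMap_neg {g : E} (h : reflection (hyp e) (g : EuclideanSpace ℝ (Fin n)) ∉ E) :
    reflection (hyp e) (piMap E e hmem g : EuclideanSpace ℝ (Fin n)) = -(g : EuclideanSpace ℝ (Fin n)) := by
  rw [piMap_neg E e hmem h, map_neg, refl_invol]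

variable (hopp : ∀ g ∈ E, -g ∉ E)

lemma mem_piMap_pos {g : E} (h : reflection (hyp e) (g : EuclideanSpace ℝ (Fin n)) ∈ E) :
    reflection (hyp e) (piMap E e hmem g : EuclideanSpace ℝ (Fin n)) ∈ E := by
  rw [refl_piMap_pos E e hmem h]; exact g.2

lemma mem_piMap_neg (hopp : ∀ g ∈ E, -g ∉ E) {g : E} (h : reflection (hyp e) (g : EuclideanSpace ℝ (Fin n)) ∉ E) :
    reflection (hyp e) (piMap E e hmem g : EuclideanSpace ℝ (Fin n)) ∉ E := by
  rw [refl_piMap_neg E e hmem h]; exact hopp _ g.2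

lemma piMap_piMap (hopp : ∀ g ∈ E, -g ∉ E) (g : E) : piMap E e hmem (piMap E e hmem g) = g := by
  by_cases h : reflection (hyp e) (g : EuclideanSpace ℝ (Fin n)) ∈ E
  · apply Subtype.ext
    rw [piMap_pos E e hmem (mem_piMap_pos E e hmem h), refl_piMap_pos E e hmem h]
  · apply Subtype.ext
    rw [piMap_neg E e hmem (mem_piMap_neg E e hmem hopp h), refl_piMap_neg E e hmem h, neg_neg]

end PizzaAux

namespace PizzaAux

variable {n : ℕ} (E : Finset (EuclideanSpace ℝ (Fin n))) (e : EuclideanSpace ℝ (Fin n))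
variable (hmem : ∀ g : E, reflection (hyp e) (g : EuclideanSpace ℝ (Fin n)) ∉ E →
    -(reflection (hyp e) (g : EuclideanSpace ℝ (Fin n))) ∈ E)

/-- The induced map on sign vectors. -/
def Phi (τ : E → Bool) : E → Bool := fun g =>
  if reflection (hyp e) (g : EuclideanSpace ℝ (Fin n)) ∈ E then τ (piMap E e hmem g)
  else !(τ (piMap E e hmem g))

lemma Phi_Phi (hopp : ∀ g ∈ E, -g ∉ E) (τ : E → Bool) : Phi E e hmem (Phi E e hmem τ) = τ := by
  funext g
  by_cases h : reflection (hyp e) (g : EuclideanSpace ℝ (Fin n)) ∈ E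
  · simp only [Phi, if_pos h, if_pos (mem_piMap_pos E e hmem h), piMap_piMap E e hmem hopp]
  · simp only [Phi, if_neg h, if_neg (mem_piMap_neg E e hmem hopp h),
      piMap_piMap E e hmem hopp, Bool.not_not]

lemma region_subset (hopp : ∀ g ∈ E, -g ∉ E) (τ : E → Bool) :
    region E (Phi E e hmem τ) ⊆ (reflection (hyp e)) ⁻¹' (region E τ) := by
  intro x hx
  intro g
  have key := hx (piMap E e hmem g)
  have hadj : ⟪(g : EuclideanSpace ℝ (Fin n)), reflection (hyp e) x⟫
      = ⟪reflection (hyp e) (g : EuclideanSpace ℝ (Fin n)), x⟫ := (refl_adj e _ x).symm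
  by_cases h : reflection (hyp e) (g : EuclideanSpace ℝ (Fin n)) ∈ E
  · have h1 : Phi E e hmem τ (piMap E e hmem g) = τ g := by
      simp only [Phi, if_pos (mem_piMap_pos E e hmem h), piMap_piMap E e hmem hopp]
    rw [h1, piMap_pos E e hmem h] at key
    rw [hadj] at *
    cases hb : τ g <;> simp only [hb] at key ⊢ <;> simpa using key
  · have h1 : Phi E e hmem τ (piMap E e hmem g) = !(τ g) := by
      simp only [Phi, if_neg (mem_piMap_neg E e hmem hopp h), piMap_piMap E e hmem hopp]
    rw [h1, piMap_neg E e hmem h] at key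
    rw [hadj]
    cases hb : τ g <;> simp [hb, inner_neg_left] at key ⊢ <;> linarith [key]

lemma region_eq (hopp : ∀ g ∈ E, -g ∉ E) (σ : E → Bool) :
    region E σ = (reflection (hyp e)) ⁻¹' (region E (Phi E e hmem σ)) := by
  apply Set.Subset.antisymm
  · have := region_subset E e hmem hopp (Phi E e hmem σ)
    rwa [Phi_Phi E e hmem hopp] at this
  · intro x hx
    have := region_subset E e hmem hopp σ hx
    simpa [refl_invol] using this

end PizzaAux

namespace PizzaAux

variable {n : ℕ} (E : Finset (EuclideanSpace ℝ (Fin n))) (e : EuclideanSpace ℝ (Fin n))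
variable (hmem : ∀ g : E, reflection (hyp e) (g : EuclideanSpace ℝ (Fin n)) ∉ E →
    -(reflection (hyp e) (g : EuclideanSpace ℝ (Fin n))) ∈ E)

lemma chamberSign_eq_prod (σ : E → Bool) :
    chamberSign E σ = ∏ g : E, (if σ g then (1 : ℝ) else -1) := by
  rw [chamberSign, Finset.prod_ite, Finset.prod_const_one, Finset.prod_const, one_mul]
  congr 2
  apply Finset.filter_congr
  intro g _
  simp [Bool.not_eq_true]

include hmem in
lemma prod_eps (he : e ∈ E) (hunit : ∀ g ∈ E, ‖g‖ = 1) (hopp : ∀ g ∈ E, -g ∉ E) :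
    (∏ g : E, (if reflection (hyp e) (g : EuclideanSpace ℝ (Fin n)) ∈ E then (1 : ℝ) else -1))
      = -1 := by
  have hee : (⟨e, he⟩ : E) ∈ (Finset.univ : Finset E) := Finset.mem_univ _
  rw [← Finset.mul_prod_erase Finset.univ _ hee]
  have h1 : reflection (hyp e) ((⟨e, he⟩ : E) : EuclideanSpace ℝ (Fin n)) ∉ E := by
    show reflection (hyp e) e ∉ E
    rw [refl_self]; exact hopp e he
  rw [if_neg h1]
  have h2 : (∏ g ∈ Finset.univ.erase (⟨e, he⟩ : E),
      (if reflection (hyp e) (g : EuclideanSpace ℝ (Fin n)) ∈ E then (1 : ℝ) else -1)) = 1 := by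
    apply Finset.prod_involution (fun a _ => piMap E e hmem a)
    · intro a _
      by_cases h : reflection (hyp e) (a : EuclideanSpace ℝ (Fin n)) ∈ E
      · rw [if_pos h, if_pos (mem_piMap_pos E e hmem h), one_mul]
      · rw [if_neg h, if_neg (mem_piMap_neg E e hmem hopp h)]; norm_num
    · intro a ha hfa
      have h : reflection (hyp e) (a : EuclideanSpace ℝ (Fin n)) ∉ E := by
        intro hmem'
        rw [if_pos hmem'] at hfa
        exact hfa rfl
      intro heq
      have hco : -(reflection (hyp e) (a : EuclideanSpace ℝ (Fin n)))
          = (a : EuclideanSpace ℝ (Fin n)) := by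
        rw [← piMap_neg E e hmem h, heq]
      have hra : reflection (hyp e) (a : EuclideanSpace ℝ (Fin n))
          = -(a : EuclideanSpace ℝ (Fin n)) := by
        rw [← neg_neg (reflection (hyp e) (a : EuclideanSpace ℝ (Fin n))), hco]
      have hspan := mem_span_of_refl_neg hra
      rcases eq_or_eq_neg (hunit e he) (hunit _ a.2) hspan with h' | h'
      · exact (Finset.ne_of_mem_erase ha) (Subtype.ext h')
      · have : -(a : EuclideanSpace ℝ (Fin n)) ∈ E := by rw [h', neg_neg]; exact he
        exact hopp _ a.2 this
    · intro a ha
      apply Finset.mem_erase_of_ne_of_mem _ (Finset.mem_univ _)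
      intro heq
      have hco : (piMap E e hmem a : EuclideanSpace ℝ (Fin n)) = e := by rw [heq]
      by_cases h : reflection (hyp e) (a : EuclideanSpace ℝ (Fin n)) ∈ E
      · rw [piMap_pos E e hmem h] at hco
        have := congrArg (reflection (hyp e)) hco
        rw [refl_invol, refl_self] at this
        have : -(a : EuclideanSpace ℝ (Fin n)) ∈ E := by rw [this, neg_neg]; exact he
        exact hopp _ a.2 this
      · rw [piMap_neg E e hmem h] at hco
        have hre : reflection (hyp e) (a : EuclideanSpace ℝ (Fin n)) = -e := by
          rw [← neg_neg (reflection (hyp e) (a : EuclideanSpace ℝ (Fin n))), hco]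
        have := congrArg (reflection (hyp e)) hre
        rw [refl_invol, map_neg, refl_self, neg_neg] at this
        exact (Finset.ne_of_mem_erase ha) (Subtype.ext this)
    · intro a _
      exact piMap_piMap E e hmem hopp a
  rw [h2, mul_one]

lemma chamberSign_Phi (he : e ∈ E) (hunit : ∀ g ∈ E, ‖g‖ = 1) (hopp : ∀ g ∈ E, -g ∉ E)
    (τ : E → Bool) :
    chamberSign E (Phi E e hmem τ) = - chamberSign E τ := by
  rw [chamberSign_eq_prod, chamberSign_eq_prod]
  have step : ∀ g : E, (if Phi E e hmem τ g then (1 : ℝ) else -1)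
      = (if reflection (hyp e) (g : EuclideanSpace ℝ (Fin n)) ∈ E then (1 : ℝ) else -1)
        * (if τ (piMap E e hmem g) then (1 : ℝ) else -1) := by
    intro g
    by_cases h : reflection (hyp e) (g : EuclideanSpace ℝ (Fin n)) ∈ E
    · simp only [Phi, if_pos h, one_mul]
    · simp only [Phi, if_neg h]
      cases τ (piMap E e hmem g) <;> norm_num
  rw [Finset.prod_congr rfl (fun g _ => step g), Finset.prod_mul_distrib,
    prod_eps E e hmem he hunit hopp]
  have hbij : Function.Bijective (piMap E e hmem) :=
    Function.Involutive.bijective (piMap_piMap E e hmem hopp)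
  rw [hbij.prod_comp (fun g => if τ g then (1 : ℝ) else -1)]
  ring

end PizzaAux

namespace PizzaAux

variable {n : ℕ}

lemma pizza_reflection (E : Finset (EuclideanSpace ℝ (Fin n)))
    (hunit : ∀ g ∈ E, ‖g‖ = 1) (hopp : ∀ g ∈ E, -g ∉ E)
    (hcox : ∀ e ∈ E, ∀ g ∈ E,
      reflection (hyp e) g ∈ E ∨ -(reflection (hyp e) g) ∈ E)
    {e : EuclideanSpace ℝ (Fin n)} (he : e ∈ E) (f : EuclideanSpace ℝ (Fin n) → ℂ) :
    pizzaC E (fun x => f (reflection (hyp e) x)) = - pizzaC E f := by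
  have hmem : ∀ g : E, reflection (hyp e) (g : EuclideanSpace ℝ (Fin n)) ∉ E →
      -(reflection (hyp e) (g : EuclideanSpace ℝ (Fin n))) ∈ E :=
    fun g h => (hcox e he _ g.2).resolve_left h
  have hmp := (reflection (hyp e)).measurePreserving
  have hemb : MeasurableEmbedding (reflection (hyp e)) :=
    (reflection (hyp e)).toHomeomorph.measurableEmbedding
  have hint : ∀ σ : E → Bool,
      (∫ x in region E σ, f (reflection (hyp e) x)) = ∫ x in region E (Phi E e hmem σ), f x := by
    intro σ
    rw [region_eq E e hmem hopp σ]
    exact hmp.setIntegral_preimage_emb hemb f _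
  have hbij : Function.Bijective (Phi E e hmem) :=
    Function.Involutive.bijective (Phi_Phi E e hmem hopp)
  unfold pizzaC
  calc (∑ σ : E → Bool, (chamberSign E σ : ℂ) * ∫ x in region E σ, f (reflection (hyp e) x))
      = ∑ σ : E → Bool, (chamberSign E σ : ℂ) * ∫ x in region E (Phi E e hmem σ), f x :=
        Finset.sum_congr rfl (fun σ _ => by rw [hint σ])
    _ = ∑ σ : E → Bool, (chamberSign E (Phi E e hmem σ) : ℂ) *
          ∫ x in region E (Phi E e hmem (Phi E e hmem σ)), f x :=
        (Fintype.sum_bijective _ hbij _ _ (fun σ => rfl)).symm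
    _ = ∑ σ : E → Bool, -((chamberSign E σ : ℂ) * ∫ x in region E σ, f x) := by
        refine Finset.sum_congr rfl (fun σ _ => ?_)
        rw [Phi_Phi E e hmem hopp, chamberSign_Phi E e hmem he hunit hopp σ]
        push_cast
        ring
    _ = - ∑ σ : E → Bool, (chamberSign E σ : ℂ) * ∫ x in region E σ, f x := by
        rw [Finset.sum_neg_distrib]

lemma det_refl {e : EuclideanSpace ℝ (Fin n)} (he : ‖e‖ = 1) :
    LinearMap.det ((reflection (hyp e)).toLinearEquiv.toLinearMap) = -1 := by
  have h0 : e ≠ 0 := by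
    intro h
    rw [h, norm_zero] at he
    norm_num at he
  have h := det_reflection (𝕜 := ℝ) (hyp e)
  rw [show (hyp e)ᗮ = ℝ ∙ e by rw [hyp, Submodule.orthogonal_orthogonal],
    finrank_span_singleton h0, pow_one] at h
  exact h

end PizzaAux


/-- For a Coxeter arrangement with Coxeter group `W` (the group generated by the orthogonal
reflections in the hyperplanes, assumed finite, with the arrangement closed under these
reflections), the pizza quantity satisfies `P(H, f ∘ w) = det(w) · P(H, f)` for all `w ∈ W`;
in particular if `f` is invariant under some reflection in `W` then `P(H, f) = 0`. -/
theorem pizza_coxeter_equivariance {n : ℕ} (E : Finset (EuclideanSpace ℝ (Fin n)))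
    (hunit : ∀ e ∈ E, ‖e‖ = 1) (hopp : ∀ e ∈ E, -e ∉ E)
    (hcox : ∀ e ∈ E, ∀ f ∈ E,
      (hyp e).reflection f ∈ E ∨ -((hyp e).reflection f) ∈ E)
    (hfin : Finite (Subgroup.closure
      {w : EuclideanSpace ℝ (Fin n) ≃ₗᵢ[ℝ] EuclideanSpace ℝ (Fin n) |
        ∃ e ∈ E, w = (hyp e).reflection}))
    (f : EuclideanSpace ℝ (Fin n) → ℂ) (hf : Integrable f) :
    (∀ w ∈ Subgroup.closure
        {w : EuclideanSpace ℝ (Fin n) ≃ₗᵢ[ℝ] EuclideanSpace ℝ (Fin n) |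
          ∃ e ∈ E, w = (hyp e).reflection},
      pizzaC E (fun x => f (w x)) = ((LinearMap.det ((w : EuclideanSpace ℝ (Fin n) ≃ₗᵢ[ℝ] EuclideanSpace ℝ (Fin n)).toLinearEquiv.toLinearMap) : ℝ) : ℂ) * pizzaC E f) ∧
    ((∃ e ∈ E, ∀ x, f ((hyp e).reflection x) = f x) → pizzaC E f = 0) := by
  have key : ∀ w ∈ Subgroup.closure
      {w : EuclideanSpace ℝ (Fin n) ≃ₗᵢ[ℝ] EuclideanSpace ℝ (Fin n) |
        ∃ e ∈ E, w = reflection (hyp e)},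
      ∀ g : EuclideanSpace ℝ (Fin n) → ℂ,
      pizzaC E (fun x => g (w x))
        = ((LinearMap.det (w.toLinearEquiv.toLinearMap) : ℝ) : ℂ) * pizzaC E g := by
    intro w hw
    refine Subgroup.closure_induction
      (p := fun w _ => ∀ g : EuclideanSpace ℝ (Fin n) → ℂ,
        pizzaC E (fun x => g (w x))
          = ((LinearMap.det (w.toLinearEquiv.toLinearMap) : ℝ) : ℂ) * pizzaC E g)
      ?_ ?_ ?_ ?_ hw
    · rintro x ⟨e, he, rfl⟩ g
      rw [PizzaAux.det_refl (hunit e he), PizzaAux.pizza_reflection E hunit hopp hcox he g]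
      push_cast
      ring
    · intro g
      have h1 : (fun x => g ((1 : EuclideanSpace ℝ (Fin n) ≃ₗᵢ[ℝ] EuclideanSpace ℝ (Fin n)) x))
          = g := rfl
      have h2 : ((1 : EuclideanSpace ℝ (Fin n) ≃ₗᵢ[ℝ] EuclideanSpace ℝ (Fin n))).toLinearEquiv.toLinearMap
          = LinearMap.id := rfl
      rw [h1, h2, LinearMap.det_id]
      norm_num
    · intro x y _ _ ihx ihy g
      have h1 : (fun v => g ((x * y) v)) = (fun v => (fun u => g (x u)) (y v)) := rfl
      have hdet : LinearMap.det ((x * y).toLinearEquiv.toLinearMap)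
          = LinearMap.det (x.toLinearEquiv.toLinearMap)
            * LinearMap.det (y.toLinearEquiv.toLinearMap) := by
        rw [← LinearMap.det_comp]
        rfl
      rw [h1, ihy (fun u => g (x u)), ihx g, hdet]
      push_cast
      ring
    · intro x _ ih g
      have h := ih (fun v => g (x⁻¹ v))
      have h1 : (fun v => (fun u => g (x⁻¹ u)) (x v)) = g := by
        funext v
        show g (x⁻¹ (x v)) = g v
        rw [show x⁻¹ (x v) = v from x.symm_apply_apply v]
      rw [h1] at h
      have hdet1 : LinearMap.det ((x⁻¹).toLinearEquiv.toLinearMap)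
          * LinearMap.det (x.toLinearEquiv.toLinearMap) = 1 := by
        rw [← LinearMap.det_comp]
        rw [show ((x⁻¹).toLinearEquiv.toLinearMap) ∘ₗ x.toLinearEquiv.toLinearMap
            = LinearMap.id from LinearMap.ext fun v => x.symm_apply_apply v]
        exact LinearMap.det_id
      have hdetC : ((LinearMap.det ((x⁻¹).toLinearEquiv.toLinearMap) : ℝ) : ℂ)
          * ((LinearMap.det (x.toLinearEquiv.toLinearMap) : ℝ) : ℂ) = 1 := by
        rw [← Complex.ofReal_mul, hdet1, Complex.ofReal_one]
      rw [h]
      rw [← mul_assoc, hdetC, one_mul]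
  constructor
  · intro w hw
    exact key w hw f
  · rintro ⟨e, he, hfe⟩
    have h := PizzaAux.pizza_reflection E hunit hopp hcox he f
    rw [show (fun x => f (reflection (hyp e) x)) = f from funext hfe] at h
    linear_combination h / 2
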